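/- Let k ≥ 3 and 1 ≤ ℓ < k/2, and let H be a k-graph with vertex partition V = A ∪ B, where |B| = ⌊(2k−2ℓ−1)n/(2(k−ℓ))⌋ and n = |V|, chosen so that e(B) is minimum among all such partitions. Define B' = {v ∈ V : deg(v,B) ≤ ε₁·C(|B|, k−1)} and A' = {v ∈ V : deg(v,B) ≥ (1−ε₁)·C(|B|, k−1)} for a constant 0 < ε₁ < 1/2. Then: if A ∩ B' ≠ ∅ then B ⊆ B', and if B ∩ A' ≠ ∅ then A ⊆ A'. -/

import Mathlib

open Finset

/-- The degree of `v` into `B`: the number of `(k−1)`-subsets `S` of `B \ {v}` with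
`{v} ∪ S` an edge. -/
def degInto {V : Type*} [DecidableEq V] (E : Finset (Finset V)) (k : ℕ)
    (v : V) (B : Finset V) : ℕ :=
  (((B.erase v).powersetCard (k - 1)).filter (fun S => insert v S ∈ E)).card

lemma count_split {V : Type*} [DecidableEq V] (E : Finset (Finset V)) (k : ℕ)
    (hk : 1 ≤ k) (hEk : ∀ e ∈ E, e.card = k) (b : V) (X : Finset V) (hb : b ∈ X) :
    (E.filter (fun e => e ⊆ X)).card
      = (E.filter (fun e => e ⊆ X.erase b)).card + degInto E k b X := by
  classical
  have hsplit := Finset.card_filter_add_card_filter_not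
    (s := E.filter (fun e => e ⊆ X)) (p := fun e => b ∈ e)
  have h1 : (E.filter (fun e => e ⊆ X)).filter (fun e => ¬ b ∈ e)
      = E.filter (fun e => e ⊆ X.erase b) := by
    rw [Finset.filter_filter]
    apply Finset.filter_congr
    intro e _
    simp only [Finset.subset_erase]
  have h2 : ((E.filter (fun e => e ⊆ X)).filter (fun e => b ∈ e)).card
      = degInto E k b X := by
    unfold degInto
    apply Finset.card_bij (fun e _ => e.erase b)
    · intro e he
      simp only [Finset.mem_filter] at he ⊢
      obtain ⟨⟨heE, heX⟩, hbe⟩ := he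
      refine ⟨Finset.mem_powersetCard.2 ⟨?_, ?_⟩, ?_⟩
      · exact Finset.erase_subset_erase _ heX
      · rw [Finset.card_erase_of_mem hbe, hEk e heE]
      · rwa [Finset.insert_erase hbe]
    · intro e₁ he₁ e₂ he₂ h
      simp only [Finset.mem_filter] at he₁ he₂
      rw [← Finset.insert_erase he₁.2, ← Finset.insert_erase he₂.2]
      exact congrArg (insert b) h
    · intro S hS
      simp only [Finset.mem_filter, Finset.mem_powersetCard] at hS
      obtain ⟨⟨hSX, hSc⟩, hSE⟩ := hS
      have hbS : b ∉ S := fun h => (Finset.mem_erase.1 (hSX h)).1 rfl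
      refine ⟨insert b S, ?_, ?_⟩
      · simp only [Finset.mem_filter]
        refine ⟨⟨hSE, ?_⟩, Finset.mem_insert_self _ _⟩
        exact Finset.insert_subset hb (hSX.trans (Finset.erase_subset _ _))
      · rw [Finset.erase_insert hbS]
  rw [h1, h2] at hsplit
  omega

lemma count_insert_le {V : Type*} [DecidableEq V] (E : Finset (Finset V)) (k : ℕ)
    (hk : 1 ≤ k) (hEk : ∀ e ∈ E, e.card = k) (a : V) (X Y : Finset V)
    (ha : a ∉ X) (hYX : Y ⊆ X) (haY : a ∉ Y) :
    (E.filter (fun e => e ⊆ insert a Y)).card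
      ≤ (E.filter (fun e => e ⊆ Y)).card + degInto E k a X := by
  classical
  have hsplit := Finset.card_filter_add_card_filter_not
    (s := E.filter (fun e => e ⊆ insert a Y)) (p := fun e => a ∈ e)
  have h1 : (E.filter (fun e => e ⊆ insert a Y)).filter (fun e => ¬ a ∈ e)
      ⊆ E.filter (fun e => e ⊆ Y) := by
    intro e he
    simp only [Finset.mem_filter] at he ⊢
    refine ⟨he.1.1, fun x hx => ?_⟩
    rcases Finset.mem_insert.1 (he.1.2 hx) with h | h
    · exact absurd (h ▸ hx) he.2
    · exact h
  have h2 : ((E.filter (fun e => e ⊆ insert a Y)).filter (fun e => a ∈ e)).card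
      ≤ degInto E k a X := by
    unfold degInto
    apply Finset.card_le_card_of_injOn (fun e => e.erase a)
    · intro e he
      simp only [Finset.mem_coe, Finset.mem_filter] at he
      obtain ⟨⟨heE, heI⟩, hae⟩ := he
      simp only [Finset.mem_coe, Finset.mem_filter, Finset.mem_powersetCard]
      refine ⟨⟨?_, ?_⟩, ?_⟩
      · intro x hx
        have hxe := Finset.mem_erase.1 hx
        have : x ∈ insert a Y := heI hxe.2
        rcases Finset.mem_insert.1 this with h | h
        · exact absurd h hxe.1
        · exact Finset.mem_erase.2 ⟨fun hxa => ha (hxa ▸ hYX h), hYX h⟩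
      · rw [Finset.card_erase_of_mem hae, hEk e heE]
      · rwa [Finset.insert_erase hae]
    · intro e₁ he₁ e₂ he₂ h
      simp only [Finset.coe_filter, Set.mem_setOf_eq] at he₁ he₂
      rw [← Finset.insert_erase he₁.2, ← Finset.insert_erase he₂.2]
      exact congrArg (insert a) h
  have h1c := Finset.card_le_card h1
  omega

/-- Key swapping lemma: minimality of `e(B)` forces every `b ∈ B` to have degree into `B`
at most that of any vertex outside `B`. -/
lemma swap_deg_le {V : Type*} [DecidableEq V] (E : Finset (Finset V)) (k : ℕ)
    (hk : 1 ≤ k) (hEk : ∀ e ∈ E, e.card = k) (B : Finset V)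
    (hmin : ∀ B'' : Finset V, B''.card = B.card →
      ((E.filter (fun e => e ⊆ B)).card ≤ (E.filter (fun e => e ⊆ B'')).card))
    (a b : V) (ha : a ∉ B) (hb : b ∈ B) :
    degInto E k b B ≤ degInto E k a B := by
  classical
  set Y := B.erase b with hY
  have haY : a ∉ Y := fun h => ha (Finset.erase_subset _ _ h)
  have hcard : (insert a Y).card = B.card := by
    rw [Finset.card_insert_of_notMem haY, hY, Finset.card_erase_of_mem hb]
    have : 1 ≤ B.card := Finset.card_pos.2 ⟨b, hb⟩
    omega
  have hmin' := hmin (insert a Y) hcard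
  have hB : (E.filter (fun e => e ⊆ B)).card
      = (E.filter (fun e => e ⊆ Y)).card + degInto E k b B :=
    count_split E k hk hEk b B hb
  have hB'' : (E.filter (fun e => e ⊆ insert a Y)).card
      ≤ (E.filter (fun e => e ⊆ Y)).card + degInto E k a B :=
    count_insert_le E k hk hEk a B Y ha (Finset.erase_subset _ _) haY
  omega

/-- For a minimal partition `V = A ∪ B` with `|B| = ⌊(2k−2ℓ−1)n/(2(k−ℓ))⌋` (minimizing
`e(B)`), letting `B'` (resp. `A'`) be the vertices of degree at most `ε₁C(|B|,k−1)`
(resp. at least `(1−ε₁)C(|B|,k−1)`) into `B`: if `A ∩ B' ≠ ∅` then `B ⊆ B'`, and if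
`B ∩ A' ≠ ∅` then `A ⊆ A'`. -/
theorem min_partition_classification
    {V : Type*} [Fintype V] [DecidableEq V]
    (k l n : ℕ) (hk : 3 ≤ k) (hl : 1 ≤ l) (hlk : 2 * l < k)
    (hn : Fintype.card V = n)
    (E : Finset (Finset V)) (hEk : ∀ e ∈ E, e.card = k)
    (A B : Finset V) (hAB : A ∪ B = Finset.univ) (hdisj : Disjoint A B)
    (hBcard : B.card = (2 * k - 2 * l - 1) * n / (2 * (k - l)))
    (hmin : ∀ B'' : Finset V, B''.card = B.card →
      ((E.filter (fun e => e ⊆ B)).card ≤ (E.filter (fun e => e ⊆ B'')).card))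
    (ε₁ : ℝ) (hε₁ : 0 < ε₁) (hε₁' : ε₁ < 1 / 2)
    (A' B' : Finset V)
    (hA' : A' = Finset.univ.filter (fun v =>
      (1 - ε₁) * (B.card.choose (k - 1) : ℝ) ≤ (degInto E k v B : ℝ)))
    (hB' : B' = Finset.univ.filter (fun v =>
      (degInto E k v B : ℝ) ≤ ε₁ * (B.card.choose (k - 1) : ℝ))) :
    ((A ∩ B').Nonempty → B ⊆ B') ∧ ((B ∩ A').Nonempty → A ⊆ A') := by
  have hk1 : 1 ≤ k := by omega
  constructor
  · rintro ⟨a, ha⟩ b hb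
    obtain ⟨haA, haB'⟩ := Finset.mem_inter.1 ha
    rw [hB', Finset.mem_filter] at haB' ⊢
    have haB : a ∉ B := Finset.disjoint_left.1 hdisj haA
    have hle := swap_deg_le E k hk1 hEk B hmin a b haB hb
    refine ⟨Finset.mem_univ _, le_trans ?_ haB'.2⟩
    exact_mod_cast hle
  · rintro ⟨b, hb⟩ a ha
    obtain ⟨hbB, hbA'⟩ := Finset.mem_inter.1 hb
    rw [hA', Finset.mem_filter] at hbA' ⊢
    have haB : a ∉ B := Finset.disjoint_left.1 hdisj ha
    have hle := swap_deg_le E k hk1 hEk B hmin a b haB hbB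
    refine ⟨Finset.mem_univ _, le_trans hbA'.2 ?_⟩
    exact_mod_cast hle
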